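/- arXiv:1803.07617 — 3 statements merged into one kernel-verified Lean document; each statement's English description precedes it below -/
import Mathlib

section
/- For symmetric real matrices A and B with A ⪯ B (i.e., B − A positive semidefinite), tr(exp(A)) ≤ tr(exp(B)). -/
open Matrix

section Aux
variable {d : ℕ}

lemma star_eq_inv_of_unitary (V : Matrix (Fin d) (Fin d) ℝ)
    (hV : V ∈ Matrix.unitaryGroup (Fin d) ℝ) : V⁻¹ = star V :=
  Matrix.inv_eq_left_inv hV.1

lemma exp_spectral (M : Matrix (Fin d) (Fin d) ℝ) (hM : M.IsHermitian) :
    NormedSpace.exp M = (hM.eigenvectorUnitary : Matrix (Fin d) (Fin d) ℝ) *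
      diagonal (fun i => Real.exp (hM.eigenvalues i)) *
      star (hM.eigenvectorUnitary : Matrix (Fin d) (Fin d) ℝ) := by
  set V : Matrix (Fin d) (Fin d) ℝ := (hM.eigenvectorUnitary : Matrix (Fin d) (Fin d) ℝ)
  have hVmem : V ∈ Matrix.unitaryGroup (Fin d) ℝ := (hM.eigenvectorUnitary).2
  have hVu : IsUnit V := ⟨⟨V, star V, hVmem.2, hVmem.1⟩, rfl⟩
  have hinv : V⁻¹ = star V := star_eq_inv_of_unitary V hVmem
  conv_lhs => rw [hM.spectral_theorem, Unitary.conjStarAlgAut_apply]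
  rw [← hinv, Matrix.exp_conj V _ hVu, Matrix.exp_diagonal]
  congr 2
  funext i
  simp [RCLike.ofReal_real_eq_id, Real.exp_eq_exp_ℝ, Pi.exp_def]

end Aux

section Aux2
variable {d : ℕ}

lemma entry_eq (V M : Matrix (Fin d) (Fin d) ℝ) (i : Fin d) :
    (star V * M * V) i i = (fun j => V j i) ⬝ᵥ M *ᵥ (fun j => V j i) := by
  simp only [Matrix.mul_apply, dotProduct, Matrix.mulVec, Matrix.star_eq_conjTranspose,
    Matrix.conjTranspose_apply, star_trivial, Finset.sum_mul, Finset.mul_sum]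
  rw [Finset.sum_comm]
  congr 1; funext k; congr 1; funext j; ring

lemma quad_form_eq (W : Matrix (Fin d) (Fin d) ℝ) (f : Fin d → ℝ) (u : Fin d → ℝ) :
    u ⬝ᵥ (W * diagonal f * star W) *ᵥ u = ∑ j, f j * ((star W *ᵥ u) j)^2 := by
  rw [← Matrix.mulVec_mulVec, ← Matrix.mulVec_mulVec, Matrix.dotProduct_mulVec u W]
  have hv : Matrix.vecMul u W = star W *ᵥ u := by
    rw [Matrix.star_eq_conjTranspose, Matrix.conjTranspose_eq_transpose_of_trivial,
      Matrix.mulVec_transpose]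
  rw [hv]
  simp [Matrix.mulVec_diagonal, dotProduct]
  congr 1; funext j; ring

lemma exp_quad_le (B : Matrix (Fin d) (Fin d) ℝ) (hB : B.IsHermitian) (u : Fin d → ℝ)
    (hu : u ⬝ᵥ u = 1) :
    Real.exp (u ⬝ᵥ B *ᵥ u) ≤ u ⬝ᵥ (NormedSpace.exp B) *ᵥ u := by
  set W : Matrix (Fin d) (Fin d) ℝ := (hB.eigenvectorUnitary : Matrix (Fin d) (Fin d) ℝ) with hW
  have hWmem : W ∈ Matrix.unitaryGroup (Fin d) ℝ := (hB.eigenvectorUnitary).2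
  set c : Fin d → ℝ := star W *ᵥ u with hc
  have hsum : ∑ j, (c j)^2 = 1 := by
    have h1 := quad_form_eq W (fun _ => 1) u
    rw [Matrix.diagonal_one, mul_one, hWmem.2] at h1
    simpa [hu] using h1.symm
  have hBq : u ⬝ᵥ B *ᵥ u = ∑ j, hB.eigenvalues j * (c j)^2 := by
    conv_lhs => rw [hB.spectral_theorem, Unitary.conjStarAlgAut_apply]
    have : Matrix.diagonal (RCLike.ofReal ∘ hB.eigenvalues) =
        Matrix.diagonal (hB.eigenvalues) := by
      congr 1
    rw [this, quad_form_eq]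
  have hEq : u ⬝ᵥ (NormedSpace.exp B) *ᵥ u = ∑ j, Real.exp (hB.eigenvalues j) * (c j)^2 := by
    rw [exp_spectral B hB, quad_form_eq]
  rw [hBq, hEq]
  have hj := convexOn_exp.map_sum_le (t := Finset.univ) (w := fun j => (c j)^2)
    (p := fun j => hB.eigenvalues j) (fun i _ => sq_nonneg _) hsum (fun i _ => Set.mem_univ _)
  calc Real.exp (∑ j, hB.eigenvalues j * (c j)^2)
      = Real.exp (∑ j, (c j)^2 • hB.eigenvalues j) := by
        congr 1; exact Finset.sum_congr rfl fun j _ => by simp [smul_eq_mul]; ring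
    _ ≤ ∑ j, (c j)^2 • Real.exp (hB.eigenvalues j) := hj
    _ = ∑ j, Real.exp (hB.eigenvalues j) * (c j)^2 := by
        exact Finset.sum_congr rfl fun j _ => by simp [smul_eq_mul]; ring

end Aux2


/-- Monotonicity of the trace exponential in the Loewner order:
if `A ⪯ B` (i.e. `B - A` is positive semidefinite) then `tr exp A ≤ tr exp B`. -/
theorem trace_exp_le_trace_exp_of_loewner {d : ℕ} (A B : Matrix (Fin d) (Fin d) ℝ)
    (hA : A.IsHermitian) (hB : B.IsHermitian) (hAB : (B - A).PosSemidef) :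
    (NormedSpace.exp A).trace ≤ (NormedSpace.exp B).trace := by
  set V : Matrix (Fin d) (Fin d) ℝ := (hA.eigenvectorUnitary : Matrix (Fin d) (Fin d) ℝ) with hV
  have hVmem : V ∈ Matrix.unitaryGroup (Fin d) ℝ := (hA.eigenvectorUnitary).2
  -- trace of exp A
  have trA : (NormedSpace.exp A).trace = ∑ i, Real.exp (hA.eigenvalues i) := by
    rw [exp_spectral A hA, Matrix.trace_mul_cycle, ← hV, hVmem.1, one_mul,
      Matrix.trace_diagonal]
  -- trace of exp B via conjugation by V
  have trB : (NormedSpace.exp B).trace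
      = ∑ i, (fun j => V j i) ⬝ᵥ (NormedSpace.exp B) *ᵥ (fun j => V j i) := by
    have h1 : (star V * NormedSpace.exp B * V).trace = (NormedSpace.exp B).trace := by
      rw [Matrix.trace_mul_cycle, hVmem.2, one_mul]
    rw [← h1, Matrix.trace]
    exact Finset.sum_congr rfl fun i _ => entry_eq V _ i
  rw [trA, trB]
  refine Finset.sum_le_sum fun i _ => ?_
  set u : Fin d → ℝ := fun j => V j i with hu
  have huu : u ⬝ᵥ u = 1 := by
    have h := entry_eq V 1 i
    rw [Matrix.mul_one, hVmem.1] at h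
    simpa [Matrix.one_mulVec] using h.symm
  have hAu : u ⬝ᵥ A *ᵥ u = hA.eigenvalues i := by
    have h := entry_eq V A i
    have hd := hA.conjStarAlgAut_star_eigenvectorUnitary
    rw [Unitary.conjStarAlgAut_star_apply] at hd
    rw [hd] at h
    simpa using h.symm
  have hle : u ⬝ᵥ A *ᵥ u ≤ u ⬝ᵥ B *ᵥ u := by
    have h := hAB.dotProduct_mulVec_nonneg u
    simp only [star_trivial, Matrix.sub_mulVec, dotProduct_sub] at h
    linarith [h]
  calc Real.exp (hA.eigenvalues i) = Real.exp (u ⬝ᵥ A *ᵥ u) := by rw [hAu]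
    _ ≤ Real.exp (u ⬝ᵥ B *ᵥ u) := Real.exp_le_exp.mpr hle
    _ ≤ u ⬝ᵥ (NormedSpace.exp B) *ᵥ u := exp_quad_le B hB u huu
end

section
/- If f: E → ℝ is convex, differentiable, and β-smooth with respect to a norm ‖·‖, then for all x, y: (1/(2β))·‖∇f(x) − ∇f(y)‖_*² ≤ f(x) − f(y) − ⟨∇f(y), x − y⟩. -/
open Filter Topology

lemma convex_grad_ineq {E : Type*} [NormedAddCommGroup E]
    [NormedSpace ℝ E]
    (f : E → ℝ) (hconv : ConvexOn ℝ Set.univ f) (hdiff : Differentiable ℝ f)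
    (x y : E) : f y + fderiv ℝ f y (x - y) ≤ f x := by
  set d : ℝ := fderiv ℝ f y (x - y) with hd
  set φ : ℝ → ℝ := fun t => f (y + t • (x - y)) with hφ
  have hder : HasDerivAt φ d 0 := by
    have h1 : HasDerivAt (fun t : ℝ => y + t • (x - y)) (x - y) 0 := by
      simpa using ((hasDerivAt_id (0:ℝ)).smul_const (x - y)).const_add y
    have h2 := ((hdiff (y + (0:ℝ) • (x - y))).hasFDerivAt).comp_hasDerivAt 0 h1
    simpa [hφ, hd, Function.comp_def] using h2
  have hslope : Tendsto (slope φ 0) (𝓝[>] 0) (𝓝 d) :=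
    (hasDerivAt_iff_tendsto_slope.mp hder).mono_left
      (nhdsWithin_mono 0 (fun t ht => ne_of_gt ht))
  have hbound : ∀ᶠ t in 𝓝[>] (0:ℝ), slope φ 0 t ≤ f x - f y := by
    filter_upwards [Ioc_mem_nhdsGT_of_mem (Set.left_mem_Ico.mpr one_pos)] with t ht
    have hcomb := hconv.2 (Set.mem_univ y) (Set.mem_univ x)
      (by linarith [ht.2] : (0:ℝ) ≤ 1 - t) (le_of_lt ht.1) (by ring)
    have heq : y + t • (x - y) = (1 - t) • y + t • x := by
      simp [smul_sub, sub_smul]; abel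
    have hφt : φ t ≤ (1 - t) * f y + t * f x := by
      rw [hφ]; simpa [heq] using hcomb
    have hφ0 : φ 0 = f y := by simp [hφ]
    rw [slope_def_field, sub_zero, div_le_iff₀ ht.1]
    nlinarith [ht.1]
  have := le_of_tendsto hslope hbound
  linarith

lemma dual_norm_attained {E : Type*} [NormedAddCommGroup E]
    [NormedSpace ℝ E] [FiniteDimensional ℝ E]
    (g : E →L[ℝ] ℝ) : ∃ v : E, ‖v‖ ≤ 1 ∧ ‖g‖ ≤ g v := by
  obtain ⟨v, hv, hmax'⟩ := (isCompact_closedBall (0:E) 1).exists_isMaxOn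
    ⟨0, Metric.mem_closedBall_self zero_le_one⟩ g.continuous.continuousOn
  have hmax : ∀ w ∈ Metric.closedBall (0:E) 1, g w ≤ g v := fun w hw => hmax' hw
  refine ⟨v, by simpa [Metric.mem_closedBall, dist_eq_norm] using hv, ?_⟩
  have h0 : (0:ℝ) ≤ g v := by simpa using hmax 0 (Metric.mem_closedBall_self zero_le_one)
  refine g.opNorm_le_bound h0 (fun w => ?_)
  rcases eq_or_ne w 0 with rfl | hw
  · simp
  · have hnw : (0:ℝ) < ‖w‖ := norm_pos_iff.mpr hw
    have hu : (‖w‖⁻¹ • w) ∈ Metric.closedBall (0:E) 1 := by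
      simp [Metric.mem_closedBall, dist_eq_norm, norm_smul, abs_of_pos hnw,
        inv_mul_cancel₀ hnw.ne']
    have h1 : g (‖w‖⁻¹ • w) ≤ g v := hmax _ hu
    have h2 : g (-(‖w‖⁻¹ • w)) ≤ g v := hmax _ (by simpa using hu)
    have : |g (‖w‖⁻¹ • w)| ≤ g v := abs_le.mpr ⟨by simpa using neg_le_of_neg_le (by simpa [map_neg] using h2), h1⟩
    have hgw : g w = ‖w‖ * g (‖w‖⁻¹ • w) := by
      rw [map_smul, smul_eq_mul, ← mul_assoc, mul_inv_cancel₀ hnw.ne', one_mul]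
    rw [Real.norm_eq_abs, hgw, abs_mul, abs_of_pos hnw, mul_comm]
    exact mul_le_mul_of_nonneg_right this hnw.le

/-- For a convex, differentiable, `β`-smooth function `f`:
`(1/(2β))·‖∇f(x) − ∇f(y)‖_*² ≤ f(x) − f(y) − ⟨∇f(y), x − y⟩`. -/
theorem smooth_convex_gradient_lower_bound {E : Type*} [NormedAddCommGroup E]
    [NormedSpace ℝ E] [FiniteDimensional ℝ E]
    (f : E → ℝ) (hconv : ConvexOn ℝ Set.univ f) (hdiff : Differentiable ℝ f) (β : ℝ)
    (hsmooth : ∀ x h : E, f (x + h) ≤ f x + fderiv ℝ f x h + β / 2 * ‖h‖ ^ 2)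
    (x y : E) :
    1 / (2 * β) * ‖fderiv ℝ f x - fderiv ℝ f y‖ ^ 2 ≤
      f x - f y - fderiv ℝ f y (x - y) := by
  have hkey : ∀ a b : E, f a + fderiv ℝ f a (b - a) ≤ f b :=
    fun a b => convex_grad_ineq f hconv hdiff b a
  have hRHS : (0:ℝ) ≤ f x - f y - fderiv ℝ f y (x - y) := by
    have := hkey y x; linarith
  rcases le_or_gt β 0 with hβ | hβ
  · have h1 : 1 / (2 * β) ≤ 0 := by
      rcases eq_or_lt_of_le hβ with rfl | h
      · norm_num
      · exact le_of_lt (div_neg_of_pos_of_neg one_pos (by linarith))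
    nlinarith [sq_nonneg ‖fderiv ℝ f x - fderiv ℝ f y‖]
  · set g : E →L[ℝ] ℝ := fderiv ℝ f x - fderiv ℝ f y with hg
    obtain ⟨v, hv1, hgv⟩ := dual_norm_attained g
    set h : E := -((‖g‖ / β) • v) with hh
    have hA := hkey y (x + h)
    have hB := hsmooth x h
    -- f y + ∇f y (x + h - y) ≤ f (x+h) ≤ f x + ∇f x h + β/2 ‖h‖²
    have hsplit : fderiv ℝ f y (x + h - y) = fderiv ℝ f y (x - y) + fderiv ℝ f y h := by
      rw [← map_add]; congr 1; abel
    have hgh : fderiv ℝ f x h - fderiv ℝ f y h = g h := by simp [hg]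
    have hghle : g h ≤ -(‖g‖^2 / β) := by
      have : g h = -(‖g‖ / β) * g v := by
        simp [hh, map_neg, map_smul]
      rw [this]
      have hc : (0:ℝ) ≤ ‖g‖/β := div_nonneg (norm_nonneg _) hβ.le
      have h2 := mul_le_mul_of_nonneg_left hgv hc
      have h3 : ‖g‖^2/β = ‖g‖/β * ‖g‖ := by field_simp
      linarith
    have hnh : ‖h‖^2 ≤ ‖g‖^2 / β^2 := by
      have h1 : ‖h‖ = (‖g‖/β) * ‖v‖ := by
        rw [hh, norm_neg, norm_smul, Real.norm_eq_abs, abs_of_nonneg (div_nonneg (norm_nonneg _) hβ.le)]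
      have hc : (0:ℝ) ≤ ‖g‖/β := div_nonneg (norm_nonneg _) hβ.le
      have h2 : ‖h‖ ≤ ‖g‖/β := by
        rw [h1]; nlinarith [norm_nonneg v]
      have h3 : ‖g‖^2/β^2 = (‖g‖/β)^2 := by field_simp
      rw [h3]
      exact pow_le_pow_left₀ (norm_nonneg _) h2 2
    have hcomb : f y + fderiv ℝ f y (x - y) - f x ≤ g h + β/2 * ‖h‖^2 := by
      rw [hsplit] at hA; linarith [hgh]
    have hfinal : g h + β/2 * ‖h‖^2 ≤ -(1/(2*β) * ‖g‖^2) := by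
      have hb2 : β/2 * ‖h‖^2 ≤ β/2 * (‖g‖^2/β^2) := by
        apply mul_le_mul_of_nonneg_left hnh (by linarith)
      have : β/2 * (‖g‖^2/β^2) = ‖g‖^2/(2*β) := by field_simp
      rw [this] at hb2
      have : -(‖g‖^2/β) + ‖g‖^2/(2*β) = -(1/(2*β)*‖g‖^2) := by field_simp; ring
      linarith
    linarith
end

section
/- Let ε₁,…,ε_n be independent Rademacher variables and let x_t = x_t(ε₁,…,ε_{t−1}) ∈ ℝ^d be predictable. Define the process X_t = U_square(Σ_{s≤t} ε_s x_s, √(Σ_{s≤t} ‖x_s‖₂²)) where U_square(x,y) = −√(2y² − ‖x‖₂²) for y ≥ ‖x‖₂ and ‖x‖₂ − 2y otherwise. Then E[‖Σ_{t=1}^n ε_t x_t‖₂] ≤ 2·E[√(Σ_{t=1}^n ‖x_t‖₂²)]. -/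
/-- The sign of a Boolean coin: `±1`. -/
def rsign (b : Bool) : ℝ := if b then 1 else -1

lemma rsign_not (b : Bool) : rsign (!b) = - rsign b := by cases b <;> simp [rsign]

lemma norm_rsign_smul {E : Type*} [NormedAddCommGroup E] [NormedSpace ℝ E] (b : Bool) (v : E) :
    ‖rsign b • v‖ = ‖v‖ := by
  rw [norm_smul]; cases b <;> simp [rsign]

/-- The Bellman function `a²/(2y) - (3/2)y` (with Lean's `a²/0 = 0` convention). -/
noncomputable def Usq (a y : ℝ) : ℝ := a ^ 2 / (2 * y) - 3 / 2 * y

lemma Usq_lower (a y : ℝ) (hy : 0 ≤ y) (h0 : y = 0 → a = 0) :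
    a - 2 * y ≤ Usq a y := by
  rcases eq_or_lt_of_le hy with h | h
  · have ha := h0 h.symm
    simp [Usq, ← h, ha]
  · have h2 : (0:ℝ) < 2 * y := by linarith
    have key : a - 2 * y + 3 / 2 * y ≤ a ^ 2 / (2 * y) := by
      rw [le_div_iff₀ h2]; nlinarith [sq_nonneg (a - y)]
    simp only [Usq]; linarith

lemma Usq_step (a b y : ℝ) (hy : 0 ≤ y) (h0 : y = 0 → a = 0) :
    (a ^ 2 + b ^ 2) / (2 * Real.sqrt (y ^ 2 + b ^ 2)) - 3 / 2 * Real.sqrt (y ^ 2 + b ^ 2)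
      ≤ a ^ 2 / (2 * y) - 3 / 2 * y := by
  rcases eq_or_lt_of_le hy with h | h
  · have ha : a = 0 := h0 h.symm
    subst ha
    rw [← h]
    rcases eq_or_ne b 0 with rfl | hb
    · norm_num
    · have hb2 : Real.sqrt ((0:ℝ) ^ 2 + b ^ 2) = |b| := by
        rw [show (0:ℝ)^2 + b^2 = b^2 by ring, Real.sqrt_sq_eq_abs]
      rw [hb2]
      have habs : 0 < |b| := abs_pos.mpr hb
      have hle : ((0:ℝ)^2 + b ^ 2) / (2 * |b|) ≤ 3 / 2 * |b| := by
        rw [div_le_iff₀ (by positivity)]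
        nlinarith [sq_abs b]
      norm_num at hle ⊢
      linarith
  · set y' := Real.sqrt (y ^ 2 + b ^ 2) with hy'
    have hy'sq : y' ^ 2 = y ^ 2 + b ^ 2 := Real.sq_sqrt (by positivity)
    have hy'0 : 0 ≤ y' := Real.sqrt_nonneg _
    have hyy' : y ≤ y' := by nlinarith
    have hy'pos : 0 < y' := lt_of_lt_of_le h hyy'
    have key : (a^2+b^2)/(2*y') - 3/2*y' - (a^2/(2*y) - 3/2*y)
        = (y*(a^2+b^2) - 3*y*y'^2 - a^2*y' + 3*y^2*y') / (2*y*y') := by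
      field_simp
      ring
    have hprod : 0 ≤ (y' - y) * (a^2 + 2*y*y' - y^2) :=
      mul_nonneg (by linarith) (by nlinarith)
    have hN : y*(a^2+b^2) - 3*y*y'^2 - a^2*y' + 3*y^2*y' ≤ 0 := by nlinarith [hy'sq, hprod]
    have hq : (y*(a^2+b^2) - 3*y*y'^2 - a^2*y' + 3*y^2*y') / (2*y*y') ≤ 0 :=
      div_nonpos_of_nonpos_of_nonneg hN (by positivity)
    linarith [key ▸ hq]

/-- Partial Rademacher sum up to time `k` (exclusive). -/
noncomputable def Ssum (n d : ℕ) (x : Fin n → (Fin n → Bool) → EuclideanSpace ℝ (Fin d))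
    (k : ℕ) (ε : Fin n → Bool) : EuclideanSpace ℝ (Fin d) :=
  ∑ t ∈ Finset.univ.filter (fun t : Fin n => (t : ℕ) < k), rsign (ε t) • x t ε

/-- Partial quadratic variation up to time `k` (exclusive). -/
noncomputable def Vsum (n d : ℕ) (x : Fin n → (Fin n → Bool) → EuclideanSpace ℝ (Fin d))
    (k : ℕ) (ε : Fin n → Bool) : ℝ :=
  ∑ t ∈ Finset.univ.filter (fun t : Fin n => (t : ℕ) < k), ‖x t ε‖ ^ 2

lemma Vsum_nonneg (n d : ℕ) (x : Fin n → (Fin n → Bool) → EuclideanSpace ℝ (Fin d))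
    (k : ℕ) (ε : Fin n → Bool) : 0 ≤ Vsum n d x k ε :=
  Finset.sum_nonneg fun _ _ => sq_nonneg _

lemma Ssum_zero_of_sqrt_Vsum (n d : ℕ) (x : Fin n → (Fin n → Bool) → EuclideanSpace ℝ (Fin d))
    (k : ℕ) (ε : Fin n → Bool) (h : Real.sqrt (Vsum n d x k ε) = 0) :
    ‖Ssum n d x k ε‖ = 0 := by
  have hV : Vsum n d x k ε = 0 :=
    le_antisymm (Real.sqrt_eq_zero'.mp h) (Vsum_nonneg n d x k ε)
  have hx : ∀ t ∈ Finset.univ.filter (fun t : Fin n => (t : ℕ) < k), ‖x t ε‖ ^ 2 = 0 :=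
    (Finset.sum_eq_zero_iff_of_nonneg (fun t _ => sq_nonneg _)).mp hV
  rw [norm_eq_zero]
  apply Finset.sum_eq_zero
  intro t ht
  have hx0 : x t ε = 0 := by
    have := hx t ht
    simpa using this
  simp [hx0]

/-- The supermartingale bound: `E[Usq(‖S_k‖, √V_k)] ≤ 0` for every `k`. -/
lemma usq_supermartingale (n d : ℕ) (x : Fin n → (Fin n → Bool) → EuclideanSpace ℝ (Fin d))
    (hpred : ∀ (t : Fin n) (ε ε' : Fin n → Bool),
      (∀ s : Fin n, (s : ℕ) < (t : ℕ) → ε s = ε' s) → x t ε = x t ε') :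
    ∀ k : ℕ, ∑ ε : Fin n → Bool, Usq ‖Ssum n d x k ε‖ (Real.sqrt (Vsum n d x k ε)) ≤ 0 := by
  intro k
  induction k with
  | zero =>
    have h : ∀ ε : Fin n → Bool, Usq ‖Ssum n d x 0 ε‖ (Real.sqrt (Vsum n d x 0 ε)) = 0 := by
      intro ε; simp [Ssum, Vsum, Usq]
    rw [Finset.sum_congr rfl (fun ε _ => h ε)]
    simp
  | succ k ih =>
    by_cases hk : k < n
    · set K : Fin n := ⟨k, hk⟩ with hKdef
      set f : (Fin n → Bool) → (Fin n → Bool) := fun ε => Function.update ε K (!ε K) with hfdef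
      have hinv : Function.Involutive f := by
        intro ε
        funext s
        rcases eq_or_ne s K with rfl | hs
        · simp [f]
        · simp [f, Function.update_of_ne hs]
      have hins : Finset.univ.filter (fun t : Fin n => (t : ℕ) < k + 1)
          = insert K (Finset.univ.filter (fun t : Fin n => (t : ℕ) < k)) := by
        ext t
        simp only [Finset.mem_filter, Finset.mem_univ, true_and, Finset.mem_insert, Fin.ext_iff]
        have hKk : (K : ℕ) = k := rfl
        omega
      have hKnot : K ∉ Finset.univ.filter (fun t : Fin n => (t : ℕ) < k) := by
        simp [hKdef]
      have hpoint : ∀ ε : Fin n → Bool,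
          Usq ‖Ssum n d x (k+1) ε‖ (Real.sqrt (Vsum n d x (k+1) ε)) +
            Usq ‖Ssum n d x (k+1) (f ε)‖ (Real.sqrt (Vsum n d x (k+1) (f ε))) ≤
          2 * Usq ‖Ssum n d x k ε‖ (Real.sqrt (Vsum n d x k ε)) := by
        intro ε
        have hx : ∀ t : Fin n, (t : ℕ) ≤ k → x t (f ε) = x t ε := by
          intro t ht
          apply hpred
          intro s hs
          have hsK : s ≠ K := by
            intro hcon
            rw [hcon] at hs
            have hKk : (K : ℕ) = k := rfl
            omega
          simp [f, Function.update_of_ne hsK]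
        have hfK : f ε K = !ε K := by simp [f]
        have hft : ∀ t : Fin n, (t : ℕ) < k → f ε t = ε t := by
          intro t ht
          have htK : t ≠ K := by
            intro hcon
            rw [hcon] at ht
            have hKk : (K : ℕ) = k := rfl
            omega
          simp [f, Function.update_of_ne htK]
        have hS : Ssum n d x k (f ε) = Ssum n d x k ε := by
          apply Finset.sum_congr rfl
          intro t ht
          have htk : (t : ℕ) < k := by simpa using ht
          rw [hx t htk.le, hft t htk]
        have hV : Vsum n d x k (f ε) = Vsum n d x k ε := by
          apply Finset.sum_congr rfl
          intro t ht
          have htk : (t : ℕ) < k := by simpa using ht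
          rw [hx t htk.le]
        have hS1 : Ssum n d x (k+1) ε = Ssum n d x k ε + rsign (ε K) • x K ε := by
          rw [Ssum, hins, Finset.sum_insert hKnot, add_comm]; rfl
        have hS2 : Ssum n d x (k+1) (f ε) = Ssum n d x k ε - rsign (ε K) • x K ε := by
          rw [Ssum, hins, Finset.sum_insert hKnot, hfK, hx K le_rfl, rsign_not]
          have : (∑ t ∈ Finset.univ.filter (fun t : Fin n => (t : ℕ) < k),
              rsign (f ε t) • x t (f ε)) = Ssum n d x k ε := hS
          rw [this, neg_smul]
          abel
        have hV1 : Vsum n d x (k+1) ε = Vsum n d x k ε + ‖x K ε‖ ^ 2 := by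
          rw [Vsum, hins, Finset.sum_insert hKnot, add_comm]; rfl
        have hV2 : Vsum n d x (k+1) (f ε) = Vsum n d x k ε + ‖x K ε‖ ^ 2 := by
          rw [Vsum, hins, Finset.sum_insert hKnot, hx K le_rfl, add_comm]
          have : (∑ t ∈ Finset.univ.filter (fun t : Fin n => (t : ℕ) < k),
              ‖x t (f ε)‖ ^ 2) = Vsum n d x k ε := hV
          rw [this]
        set a := ‖Ssum n d x k ε‖ with ha
        set b := ‖x K ε‖ with hb
        set y := Real.sqrt (Vsum n d x k ε) with hy
        have hVnn : 0 ≤ Vsum n d x k ε := Vsum_nonneg n d x k ε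
        have hysq : y ^ 2 = Vsum n d x k ε := Real.sq_sqrt hVnn
        have hrw : Vsum n d x k ε + b ^ 2 = y ^ 2 + b ^ 2 := by rw [hysq]
        have h0 : y = 0 → a = 0 := fun h => Ssum_zero_of_sqrt_Vsum n d x k ε h
        have hw : ‖rsign (ε K) • x K ε‖ = b := by rw [norm_rsign_smul]
        have hpar : ‖Ssum n d x (k+1) ε‖ ^ 2 + ‖Ssum n d x (k+1) (f ε)‖ ^ 2
            = 2 * a ^ 2 + 2 * b ^ 2 := by
          rw [hS1, hS2]
          have hpl := parallelogram_law_with_norm ℝ (Ssum n d x k ε) (rsign (ε K) • x K ε)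
          rw [← ha] at hpl
          rw [hw] at hpl
          nlinarith [hpl]
        have hstep := Usq_step a b y (Real.sqrt_nonneg _) h0
        simp only [Usq]
        rw [hV1, hV2, hrw]
        have hsumdiv : ‖Ssum n d x (k+1) ε‖ ^ 2 / (2 * Real.sqrt (y ^ 2 + b ^ 2))
            + ‖Ssum n d x (k+1) (f ε)‖ ^ 2 / (2 * Real.sqrt (y ^ 2 + b ^ 2))
            = (2 * a ^ 2 + 2 * b ^ 2) / (2 * Real.sqrt (y ^ 2 + b ^ 2)) := by
          rw [← add_div, hpar]
        have h2 : (2 * a ^ 2 + 2 * b ^ 2) / (2 * Real.sqrt (y ^ 2 + b ^ 2))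
            = 2 * ((a ^ 2 + b ^ 2) / (2 * Real.sqrt (y ^ 2 + b ^ 2))) := by ring
        linarith [hstep, hsumdiv, h2]
      -- sum it up
      have hperm : (∑ ε : Fin n → Bool,
            Usq ‖Ssum n d x (k+1) (f ε)‖ (Real.sqrt (Vsum n d x (k+1) (f ε))))
          = ∑ ε : Fin n → Bool, Usq ‖Ssum n d x (k+1) ε‖ (Real.sqrt (Vsum n d x (k+1) ε)) :=
        Equiv.sum_comp hinv.toPerm
          (fun ε => Usq ‖Ssum n d x (k+1) ε‖ (Real.sqrt (Vsum n d x (k+1) ε)))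
      have hsum := Finset.sum_le_sum (fun ε (_ : ε ∈ Finset.univ) => hpoint ε)
      rw [Finset.sum_add_distrib, hperm, ← Finset.mul_sum] at hsum
      linarith [ih]
    · have hset : Finset.univ.filter (fun t : Fin n => (t : ℕ) < k + 1)
          = Finset.univ.filter (fun t : Fin n => (t : ℕ) < k) := by
        ext t
        simp only [Finset.mem_filter, Finset.mem_univ, true_and]
        have := t.isLt
        omega
      simp only [Ssum, Vsum, hset]
      exact ih

/-- Osękowski's sharp square-function inequality for predictable Rademacher-martingales in `ℝᵈ`:
`E‖Σₜ εₜ xₜ‖₂ ≤ 2 E√(Σₜ ‖xₜ‖₂²)`.  Expectations over the `n` independent Rademacher signs are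
written as normalized sums over all sign patterns `ε : Fin n → Bool`. -/
theorem square_function_inequality (n d : ℕ)
    (x : Fin n → (Fin n → Bool) → EuclideanSpace ℝ (Fin d))
    (hpred : ∀ (t : Fin n) (ε ε' : Fin n → Bool),
      (∀ s : Fin n, (s : ℕ) < (t : ℕ) → ε s = ε' s) → x t ε = x t ε') :
    (∑ ε : Fin n → Bool, ‖∑ t, rsign (ε t) • x t ε‖) / 2 ^ n ≤
      2 * ((∑ ε : Fin n → Bool, Real.sqrt (∑ t, ‖x t ε‖ ^ 2)) / 2 ^ n) := by
  have huniv : Finset.univ.filter (fun t : Fin n => (t : ℕ) < n) = Finset.univ := by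
    apply Finset.filter_true_of_mem
    intro t _
    exact t.isLt
  have hmain := usq_supermartingale n d x hpred n
  have hlow : ∀ ε : Fin n → Bool,
      ‖Ssum n d x n ε‖ ≤ Usq ‖Ssum n d x n ε‖ (Real.sqrt (Vsum n d x n ε))
        + 2 * Real.sqrt (Vsum n d x n ε) := by
    intro ε
    have := Usq_lower ‖Ssum n d x n ε‖ (Real.sqrt (Vsum n d x n ε)) (Real.sqrt_nonneg _)
      (fun h => Ssum_zero_of_sqrt_Vsum n d x n ε h)
    linarith
  have hsum : (∑ ε : Fin n → Bool, ‖Ssum n d x n ε‖)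
      ≤ 2 * ∑ ε : Fin n → Bool, Real.sqrt (Vsum n d x n ε) := by
    have h1 := Finset.sum_le_sum (fun ε (_ : ε ∈ Finset.univ) => hlow ε)
    rw [Finset.sum_add_distrib, ← Finset.mul_sum] at h1
    linarith [hmain]
  have hS : ∀ ε : Fin n → Bool, Ssum n d x n ε = ∑ t, rsign (ε t) • x t ε := by
    intro ε; rw [Ssum, huniv]
  have hV : ∀ ε : Fin n → Bool, Vsum n d x n ε = ∑ t, ‖x t ε‖ ^ 2 := by
    intro ε; rw [Vsum, huniv]
  simp only [hS, hV] at hsum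
  rw [← mul_div_assoc]
  gcongr
end
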